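/- arXiv:2109.01472 — 3 statements merged into one kernel-verified Lean document; each statement's English description precedes it below -/
import Mathlib

section
/- For every partition p of 2n with empty 2-core, there exists a D-partition q of 2n with q ≤ p in the dominance order; moreover there is a unique maximal such q, the D-collapse of p. -/
open scoped Classical

/-- Two cells of a Young diagram are adjacent (horizontally or vertically). -/
def Adj (c d : ℕ × ℕ) : Prop :=
  (c.1 = d.1 ∧ (c.2 + 1 = d.2 ∨ d.2 + 1 = c.2)) ∨
  (c.2 = d.2 ∧ (c.1 + 1 = d.1 ∨ d.1 + 1 = c.1))

/-- `c = (i, j)` is a cell of the Young diagram with row lengths `l`. -/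
def Cell (l : List ℕ) (c : ℕ × ℕ) : Prop := c.2 < l.getD c.1 0

/-- A standard domino tableau with `n` dominoes: a shape (weakly decreasing list of
positive row lengths summing to `2n`) together with a labelling of its cells such that
each label `k ∈ {1,…,n}` occupies exactly two adjacent cells and the cells with labels
`≤ k` always form a Young diagram (a lower set). -/
structure SDT (n : ℕ) where
  shape : List ℕ
  sorted : shape.Pairwise (· ≥ ·)
  pos : ∀ x ∈ shape, 0 < x
  sum_eq : shape.sum = 2 * n
  label : ℕ × ℕ → ℕ
  dominoes : ∀ k, 1 ≤ k → k ≤ n →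
    ∃ c d : ℕ × ℕ, c ≠ d ∧ Adj c d ∧
      ∀ x, (Cell shape x ∧ label x = k) ↔ (x = c ∨ x = d)
  lower : ∀ k, IsLowerSet {x : ℕ × ℕ | Cell shape x ∧ label x ≤ k}

/-- The number of vertical dominoes of a standard domino tableau. -/
noncomputable def nVert {n : ℕ} (T : SDT n) : ℕ :=
  ((Finset.Icc 1 n).filter (fun k =>
    ∃ i j : ℕ, Cell T.shape (i + 1, j) ∧ T.label (i, j) = k ∧ T.label (i + 1, j) = k)).card

/-- The parts of a partition as a weakly decreasing list. -/
def partList {N : ℕ} (p : N.Partition) : List ℕ := (p.parts.sort (· ≤ ·)).reverse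

/-- The Young diagram with row lengths `l` admits a tiling by dominoes:
an adjacent-fixed-point-free pairing of its cells (empty 2-core). -/
def HasTiling (l : List ℕ) : Prop :=
  ∃ t : ℕ × ℕ → ℕ × ℕ, ∀ c, Cell l c →
    Cell l (t c) ∧ t (t c) = c ∧ t c ≠ c ∧ Adj c (t c)

/-- A D-partition: every even part occurs with even multiplicity. -/
def IsDPartition {N : ℕ} (p : N.Partition) : Prop :=
  ∀ m ∈ p.parts, Even m → Even (p.parts.count m)

/-- Dominance order: `p ≤ q` iff every partial sum of the parts of `p` (in decreasing order)
is at most the corresponding partial sum for `q`. -/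
def DomLE {N : ℕ} (p q : N.Partition) : Prop :=
  ∀ k, ((partList p).take k).sum ≤ ((partList q).take k).sum

namespace DColl
def fM (s : Multiset ℕ) (k : ℕ) : ℕ := (s.map fun x => min x k).sum
def cp (s : Multiset ℕ) (k : ℕ) : ℕ := (s.map fun x => if k ≤ x then 1 else 0).sum
def gM (s : Multiset ℕ) (k : ℕ) : ℕ := (s.map fun x => x - k).sum

lemma fM_zero (s : Multiset ℕ) : fM s 0 = 0 := by simp [fM]

lemma fM_succ (s : Multiset ℕ) (k : ℕ) : fM s (k+1) = fM s k + cp s (k+1) := by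
  induction s using Multiset.induction_on with
  | empty => simp [fM, cp]
  | cons a s ih => simp only [fM, cp, Multiset.map_cons, Multiset.sum_cons] at *; split <;> omega

lemma cp_succ_le (s : Multiset ℕ) (k : ℕ) : cp s (k+1) ≤ cp s k := by
  induction s using Multiset.induction_on with
  | empty => simp [cp]
  | cons a s ih => simp only [cp, Multiset.map_cons, Multiset.sum_cons] at *; split <;> split <;> omega

lemma cp_count (s : Multiset ℕ) (k : ℕ) : cp s k = s.count k + cp s (k+1) := by
  induction s using Multiset.induction_on with
  | empty => simp [cp]
  | cons a s ih =>
    simp only [cp, Multiset.map_cons, Multiset.sum_cons, Multiset.count_cons] at *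
    split_ifs <;> omega

lemma fg (s : Multiset ℕ) (k : ℕ) : fM s k + gM s k = s.sum := by
  induction s using Multiset.induction_on with
  | empty => simp [fM, gM]
  | cons a s ih => simp only [fM, gM, Multiset.map_cons, Multiset.sum_cons] at *; omega

lemma gM_zero (s : Multiset ℕ) : gM s 0 = s.sum := by
  have := fg s 0; have := fM_zero s; omega

lemma fM_const (s : Multiset ℕ) (k : ℕ) (h : ∀ x ∈ s, x ≤ k) : fM s k = s.sum := by
  induction s using Multiset.induction_on with
  | empty => simp [fM]
  | cons a s ih =>
    simp only [fM, Multiset.map_cons, Multiset.sum_cons] at *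
    have ha := h a (Multiset.mem_cons_self a s)
    rw [ih (fun x hx => h x (Multiset.mem_cons_of_mem hx))]
    omega


def TL (a : List ℕ) (k : ℕ) : ℕ := (a.take k).sum
def gL (a : List ℕ) (m : ℕ) : ℕ := (a.map fun x => x - m).sum

lemma L1 (a : List ℕ) : ∀ (k m : ℕ), TL a k ≤ gL a m + k * m := by
  induction a with
  | nil => intro k m; simp [TL, gL]
  | cons x t ih =>
    intro k m
    cases k with
    | zero => simp [TL]
    | succ k =>
      have := ih k m
      simp only [TL, gL, List.take_succ_cons, List.map_cons, List.sum_cons] at *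
      have hexp : (k+1) * m = k * m + m := by ring
      omega
      
lemma gL_zero_of_le (a : List ℕ) (m : ℕ) (h : ∀ y ∈ a, y ≤ m) : gL a m = 0 := by
  induction a with
  | nil => simp [gL]
  | cons x t ih =>
    simp only [gL, List.map_cons, List.sum_cons] at *
    have := h x (by simp)
    rw [ih (fun y hy => h y (by simp [hy]))]
    omega

lemma L2 (a : List ℕ) (h : a.Pairwise (· ≥ ·)) : ∀ k, gL a (a.getD k 0) + k * a.getD k 0 ≤ TL a k := by
  induction a with
  | nil => intro k; simp [TL, gL]
  | cons x t ih =>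
    rw [List.pairwise_cons] at h
    intro k
    cases k with
    | zero =>
      have h0 : (x :: t).getD 0 0 = x := rfl
      rw [h0]
      have : gL (x :: t) x = 0 := gL_zero_of_le _ _ (by
        intro y hy
        rcases List.mem_cons.mp hy with h1 | h1
        · omega
        · exact h.1 y h1)
      simp [this, TL]
    | succ k =>
      have hg : (x :: t).getD (k+1) 0 = t.getD k 0 := rfl
      rw [hg]
      have hmx : t.getD k 0 ≤ x := by
        by_cases hk : k < t.length
        · have he : t.getD k 0 = t[k] := List.getD_eq_getElem t 0 hk
          exact he ▸ h.1 _ (List.getElem_mem hk)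
        · have he : t.getD k 0 = 0 := List.getD_eq_default t 0 (by omega)
          omega
      have iht := ih h.2 k
      simp only [TL, gL, List.take_succ_cons, List.map_cons, List.sum_cons] at *
      have hexp : (k+1) * t.getD k 0 = k * t.getD k 0 + t.getD k 0 := by ring
      omega

lemma L3 (a : List ℕ) (h : a.Pairwise (· ≥ ·)) : ∀ m, ∃ k, gL a m + k * m = TL a k := by
  induction a with
  | nil => intro m; exact ⟨0, by simp [TL, gL]⟩
  | cons x t ih =>
    rw [List.pairwise_cons] at h
    intro m
    by_cases hxm : x ≤ m
    · refine ⟨0, ?_⟩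
      have : gL (x :: t) m = 0 := gL_zero_of_le _ _ (by
        intro y hy
        rcases List.mem_cons.mp hy with h1 | h1
        · omega
        · have := h.1 y h1; omega)
      simp [this, TL]
    · obtain ⟨k, hk⟩ := ih h.2 m
      refine ⟨k+1, ?_⟩
      simp only [TL, gL, List.take_succ_cons, List.map_cons, List.sum_cons] at *
      have hexp : (k+1) * m = k * m + m := by ring
      omega


lemma partList_sorted {N : ℕ} (p : N.Partition) : (partList p).Pairwise (· ≥ ·) := by
  have h := Multiset.pairwise_sort p.parts (· ≤ ·)
  unfold partList
  exact List.pairwise_reverse.mpr h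

lemma gL_partList {N : ℕ} (p : N.Partition) (m : ℕ) : gL (partList p) m = gM p.parts m := by
  rw [partList, gL, gM]
  conv_rhs => rw [← Multiset.sort_eq p.parts (· ≤ ·)]
  rw [Multiset.map_coe, Multiset.sum_coe, List.map_reverse, List.sum_reverse]

lemma TL_partList {N : ℕ} (p : N.Partition) (k : ℕ) :
    ((partList p).take k).sum = TL (partList p) k := rfl

lemma domle_iff {N : ℕ} (q p : N.Partition) :
    DomLE q p ↔ ∀ m, gM q.parts m ≤ gM p.parts m := by
  constructor
  · intro h m
    obtain ⟨k, hk⟩ := L3 (partList q) (partList_sorted q) m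
    have h1 := L1 (partList p) k m
    have h2 := h k
    rw [TL_partList, TL_partList] at h2
    rw [gL_partList] at hk
    rw [gL_partList] at h1
    omega
  · intro h k
    rw [TL_partList, TL_partList]
    have h2 := L2 (partList p) (partList_sorted p) k
    have h1 := L1 (partList q) k ((partList p).getD k 0)
    rw [gL_partList] at h2 h1
    have := h ((partList p).getD k 0)
    omega

lemma part_le_sum {N : ℕ} (p : N.Partition) {x : ℕ} (hx : x ∈ p.parts) : x ≤ N := by
  have := Multiset.single_le_sum (fun y (_ : y ∈ p.parts) => Nat.zero_le y) x hx
  rw [p.parts_sum] at this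
  exact this

lemma fM_big {N : ℕ} (p : N.Partition) {k : ℕ} (h : N ≤ k) : fM p.parts k = N := by
  rw [fM_const p.parts k (fun x hx => le_trans (part_le_sum p hx) h), p.parts_sum]

lemma part_ext {N : ℕ} (q r : N.Partition) (h : ∀ k, fM q.parts k = fM r.parts k) : q = r := by
  have hcp : ∀ k, cp q.parts (k+1) = cp r.parts (k+1) := by
    intro k
    have h1 := fM_succ q.parts k
    have h2 := fM_succ r.parts k
    have := h k; have := h (k+1)
    omega
  have hparts : q.parts = r.parts := by
    ext a
    cases a with
    | zero =>
      rw [Multiset.count_eq_zero_of_notMem, Multiset.count_eq_zero_of_notMem]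
      · intro hm; exact absurd (r.parts_pos hm) (by omega)
      · intro hm; exact absurd (q.parts_pos hm) (by omega)
    | succ m =>
      have h1 := cp_count q.parts (m+1)
      have h2 := cp_count r.parts (m+1)
      have := hcp m; have := hcp (m+1)
      omega
  cases q; cases r; simpa using hparts

lemma isD_iff {N : ℕ} (hN : N % 2 = 0) (q : N.Partition) :
    IsDPartition q ↔ ∀ k, k % 2 = 1 → fM q.parts k % 2 = 0 := by
  have hstepgen : ∀ k, fM q.parts (k+2) = fM q.parts k + q.parts.count (k+1) + 2 * cp q.parts (k+2) := by
    intro k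
    have h1 : fM q.parts (k+2) = fM q.parts (k+1) + cp q.parts (k+2) := fM_succ q.parts (k+1)
    have h2 := fM_succ q.parts k
    have h3 : cp q.parts (k+1) = q.parts.count (k+1) + cp q.parts (k+2) := cp_count q.parts (k+1)
    omega
  constructor
  · intro hD k hk
    have hstep : ∀ j, j % 2 = 1 → fM q.parts (j+2) % 2 = fM q.parts j % 2 := by
      intro j hj
      have hc : q.parts.count (j+1) % 2 = 0 := by
        by_cases hm : (j+1) ∈ q.parts
        · have := hD (j+1) hm (Nat.even_iff.mpr (by omega))
          exact Nat.even_iff.mp this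
        · rw [Multiset.count_eq_zero_of_notMem hm]
        
      have := hstepgen j
      omega
    have key : ∀ j k, k % 2 = 1 → fM q.parts (k + 2*j) % 2 = fM q.parts k % 2 := by
      intro j
      induction j with
      | zero => intro k _; rfl
      | succ j ih =>
        intro k hk
        have h1 := ih (k+2) (by omega)
        have h2 := hstep k hk
        have he : k + 2*(j+1) = (k+2) + 2*j := by ring
        rw [he, h1, h2]
    have hbig : fM q.parts (k + 2*N) = N := fM_big q (by omega)
    have := key N k hk
    omega
  · intro h m hm hme
    have hm2 : m % 2 = 0 := Nat.even_iff.mp hme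
    have hpos : 0 < m := q.parts_pos hm
    obtain ⟨i, hi⟩ : ∃ i, m = 2*i+2 := ⟨(m-2)/2, by omega⟩
    have h1 := h (2*i+1) (by omega)
    have h2 := h (2*i+3) (by omega)
    have h3 : fM q.parts (2*i+3) = fM q.parts (2*i+1) + q.parts.count (2*i+2) + 2 * cp q.parts (2*i+3) := hstepgen (2*i+1)
    rw [Nat.even_iff]
    subst hi
    omega


lemma cp_add (s t : Multiset ℕ) (k : ℕ) : cp (s + t) k = cp s k + cp t k := by
  simp [cp, Multiset.map_add, Multiset.sum_add]

lemma cp_sum {ι : Type} (s : Finset ι) (f : ι → Multiset ℕ) (k : ℕ) :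
    cp (∑ i ∈ s, f i) k = ∑ i ∈ s, cp (f i) k := by
  induction s using Finset.induction_on with
  | empty => simp [cp]
  | insert a s hx ih => rw [Finset.sum_insert hx, Finset.sum_insert hx, cp_add, ih]

lemma cp_replicate (t a k : ℕ) : cp (Multiset.replicate t a) k = if k ≤ a then t else 0 := by
  induction t with
  | zero => simp [cp]
  | succ t ih =>
    rw [Multiset.replicate_succ]
    simp only [cp, Multiset.map_cons, Multiset.sum_cons] at *
    rw [ih]
    split <;> omega

lemma exists_join {N : ℕ} (q r : N.Partition) :
    ∃ J : N.Partition, ∀ k, fM J.parts k = min (fM q.parts k) (fM r.parts k) := by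
  set M : ℕ → ℕ := fun k => min (fM q.parts k) (fM r.parts k) with hMdef
  have hfmono : ∀ (s : Multiset ℕ) k, fM s k ≤ fM s (k+1) := by
    intro s k; have := fM_succ s k; omega
  have hfcc : ∀ (s : Multiset ℕ) k, fM s (k+2) + fM s k ≤ fM s (k+1) + fM s (k+1) := by
    intro s k
    have h1 : fM s (k+2) = fM s (k+1) + cp s (k+2) := fM_succ s (k+1)
    have h2 := fM_succ s k
    have h3 : cp s (k+2) ≤ cp s (k+1) := cp_succ_le s (k+1)
    omega
  have hM0 : M 0 = 0 := by simp [hMdef, fM_zero]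
  have hMmono : ∀ k, M k ≤ M (k+1) := by
    intro k
    exact le_min (le_trans (min_le_left _ _) (hfmono _ k)) (le_trans (min_le_right _ _) (hfmono _ k))
  have hMN : ∀ k, N ≤ k → M k = N := by
    intro k hk
    simp [hMdef, fM_big q hk, fM_big r hk]
  have hMcc : ∀ k, M (k+2) + M k ≤ M (k+1) + M (k+1) := by
    intro k
    rcases min_cases (fM q.parts (k+1)) (fM r.parts (k+1)) with ⟨he, _⟩ | ⟨he, _⟩
    · calc M (k+2) + M k ≤ fM q.parts (k+2) + fM q.parts k :=
            Nat.add_le_add (min_le_left _ _) (min_le_left _ _)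
        _ ≤ fM q.parts (k+1) + fM q.parts (k+1) := hfcc _ _
        _ = M (k+1) + M (k+1) := by rw [← he]
    · calc M (k+2) + M k ≤ fM r.parts (k+2) + fM r.parts k :=
            Nat.add_le_add (min_le_right _ _) (min_le_right _ _)
        _ ≤ fM r.parts (k+1) + fM r.parts (k+1) := hfcc _ _
        _ = M (k+1) + M (k+1) := by rw [← he]
  set c : ℕ → ℕ := fun k => M (k+1) - M k with hcdef
  have hcanti1 : ∀ k, c (k+1) ≤ c k := by
    intro k
    have h1 := hMcc k
    have h2 := hMmono k
    have h3 := hMmono (k+1)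
    have h4 : M (k+1+1) = M (k+2) := rfl
    simp only [hcdef]
    omega
  have hcanti : Antitone c := antitone_nat_of_succ_le hcanti1
  have hcN : ∀ k, N ≤ k → c k = 0 := by
    intro k hk
    simp only [hcdef]
    rw [hMN k hk, hMN (k+1) (by omega)]
    omega
  set A : Multiset ℕ := ∑ i ∈ Finset.range N, Multiset.replicate (c i - c (i+1)) (i+1) with hAdef
  have hposA : ∀ {x : ℕ}, x ∈ A → 0 < x := by
    intro x hx
    rw [hAdef, Multiset.mem_sum] at hx
    obtain ⟨i, _, hxi⟩ := hx
    rw [Multiset.eq_of_mem_replicate hxi]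
    omega
  have hleA : ∀ x ∈ A, x ≤ N := by
    intro x hx
    rw [hAdef, Multiset.mem_sum] at hx
    obtain ⟨i, hi, hxi⟩ := hx
    rw [Finset.mem_range] at hi
    rw [Multiset.eq_of_mem_replicate hxi]
    omega
  have tele : ∀ k j, (∑ i ∈ Finset.Ico k (k+j), (c i - c (i+1))) = c k - c (k+j) := by
    intro k j
    induction j with
    | zero => simp
    | succ j ih =>
      have h1 : k + (j+1) = (k+j) + 1 := by omega
      rw [h1, Finset.sum_Ico_succ_top (by omega), ih]
      have h2 := hcanti (show k ≤ k + j by omega)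
      have h3 := hcanti1 (k+j)
      omega
  have hcpA : ∀ k, cp A (k+1) = c k := by
    intro k
    rw [hAdef, cp_sum]
    have hterm : ∀ i ∈ Finset.range N, cp (Multiset.replicate (c i - c (i+1)) (i+1)) (k+1)
        = if k ≤ i then c i - c (i+1) else 0 := by
      intro i _
      rw [cp_replicate]
      by_cases h : k ≤ i
      · rw [if_pos (by omega), if_pos h]
      · rw [if_neg (by omega), if_neg h]
    rw [Finset.sum_congr rfl hterm]
    by_cases hkN : k ≤ N
    · rw [Finset.range_eq_Ico, ← Finset.sum_Ico_consecutive _ (Nat.zero_le k) hkN]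
      have hz : ∑ i ∈ Finset.Ico 0 k, (if k ≤ i then c i - c (i+1) else 0) = 0 := by
        apply Finset.sum_eq_zero
        intro i hi
        rw [Finset.mem_Ico] at hi
        rw [if_neg (by omega)]
      have h2 : ∑ i ∈ Finset.Ico k N, (if k ≤ i then c i - c (i+1) else 0)
          = ∑ i ∈ Finset.Ico k N, (c i - c (i+1)) := by
        apply Finset.sum_congr rfl
        intro i hi
        rw [Finset.mem_Ico] at hi
        rw [if_pos hi.1]
      rw [hz, h2]
      have := tele k (N - k)
      rw [show k + (N - k) = N by omega] at this
      rw [this, hcN N le_rfl]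
      omega
    · rw [Finset.sum_eq_zero, hcN k (by omega)]
      intro i hi
      rw [Finset.mem_range] at hi
      rw [if_neg (by omega)]
  have hfA : ∀ k, fM A k = M k := by
    intro k
    induction k with
    | zero => rw [fM_zero, hM0]
    | succ k ih =>
      rw [fM_succ, ih, hcpA]
      have := hMmono k
      simp only [hcdef]
      omega
  have hsumA : A.sum = N := by
    have h1 := fM_const A N hleA
    rw [hfA N, hMN N le_rfl] at h1
    omega
  exact ⟨⟨A, hposA, hsumA⟩, hfA⟩

end DColl


/-- For every partition `p` of `2n` with empty 2-core there exists a D-partition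
`q` of `2n` with `q ≤ p` in dominance order; moreover there is a unique maximal such `q`,
the D-collapse of `p`. -/
theorem exists_unique_D_collapse (n : ℕ) (p : (2 * n).Partition)
    (hcore : HasTiling (partList p)) :
    ∃! q : (2 * n).Partition, IsDPartition q ∧ DomLE q p ∧
      ∀ r : (2 * n).Partition, IsDPartition r → DomLE r p → DomLE r q := by
  classical
  -- the all-ones partition
  have hq0ex : ∃ q0 : (2*n).Partition, q0.parts = Multiset.replicate (2*n) 1 :=
    ⟨⟨Multiset.replicate (2*n) 1,
      fun {i} hi => by have := Multiset.eq_of_mem_replicate hi; omega,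
      by simp [Multiset.sum_replicate]⟩, rfl⟩
  obtain ⟨q0, hq0parts⟩ := hq0ex
  have hq0D : IsDPartition q0 := by
    intro m hm hme
    rw [hq0parts] at hm
    have h1 := Multiset.eq_of_mem_replicate hm
    subst h1
    exact absurd hme (by simp)
  have hq0p : DomLE q0 p := by
    rw [DColl.domle_iff]
    intro m
    cases m with
    | zero => rw [DColl.gM_zero, DColl.gM_zero, q0.parts_sum, p.parts_sum]
    | succ m =>
      have hz : DColl.gM q0.parts (m+1) = 0 := by
        rw [hq0parts, DColl.gM, Multiset.map_replicate, Multiset.sum_replicate]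
        simp
      rw [hz]
      exact Nat.zero_le _
  set S : Finset ((2*n).Partition) :=
    Finset.univ.filter (fun q => IsDPartition q ∧ DomLE q p) with hS
  have hq0S : q0 ∈ S := by
    rw [hS, Finset.mem_filter]
    exact ⟨Finset.mem_univ _, hq0D, hq0p⟩
  obtain ⟨q, hqS, hqmin⟩ := Finset.exists_min_image S
    (fun q => ∑ m ∈ Finset.range (2*n+1), DColl.fM q.parts m) ⟨q0, hq0S⟩
  rw [hS, Finset.mem_filter] at hqS
  obtain ⟨-, hqD, hqp⟩ := hqS
  have key : ∀ r : (2*n).Partition, IsDPartition r → DomLE r p → DomLE r q := by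
    intro r hrD hrp
    obtain ⟨J, hJ⟩ := DColl.exists_join q r
    have hJD : IsDPartition J := by
      rw [DColl.isD_iff (by omega)]
      intro k hk
      rw [hJ k]
      rcases min_choice (DColl.fM q.parts k) (DColl.fM r.parts k) with he | he <;> rw [he]
      · exact (DColl.isD_iff (by omega) q).mp hqD k hk
      · exact (DColl.isD_iff (by omega) r).mp hrD k hk
    have hfacts : ∀ m, (DColl.fM J.parts m = DColl.fM q.parts m ∨
        DColl.fM J.parts m = DColl.fM r.parts m) ∧
        DColl.fM J.parts m ≤ DColl.fM q.parts m ∧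
        DColl.fM J.parts m ≤ DColl.fM r.parts m := by
      intro m
      rw [hJ m]
      exact ⟨min_choice _ _, min_le_left _ _, min_le_right _ _⟩
    have hgq := (DColl.domle_iff q p).mp hqp
    have hgr := (DColl.domle_iff r p).mp hrp
    have efacts : ∀ (w : (2*n).Partition) m, DColl.fM w.parts m + DColl.gM w.parts m = 2*n := by
      intro w m
      have := DColl.fg w.parts m
      rw [w.parts_sum] at this
      exact this
    have hJp : DomLE J p := by
      rw [DColl.domle_iff]
      intro m
      have h0 := hfacts m
      have e1 := efacts J m; have e2 := efacts q m; have e3 := efacts r m; have e4 := efacts p m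
      have hg1 := hgq m; have hg2 := hgr m
      omega
    have hqJ : DomLE q J := by
      rw [DColl.domle_iff]
      intro m
      have h0 := hfacts m
      have e1 := efacts J m; have e2 := efacts q m
      omega
    have hrJ : DomLE r J := by
      rw [DColl.domle_iff]
      intro m
      have h0 := hfacts m
      have e1 := efacts J m; have e3 := efacts r m
      omega
    have hJS : J ∈ S := by
      rw [hS, Finset.mem_filter]
      exact ⟨Finset.mem_univ _, hJD, hJp⟩
    have hmin := hqmin J hJS
    have hle : ∀ m ∈ Finset.range (2*n+1), DColl.fM J.parts m ≤ DColl.fM q.parts m :=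
      fun m _ => (hfacts m).2.1
    have hWle := Finset.sum_le_sum hle
    have hWeq : ∑ m ∈ Finset.range (2*n+1), DColl.fM J.parts m
        = ∑ m ∈ Finset.range (2*n+1), DColl.fM q.parts m := le_antisymm hWle hmin
    have hptws := (Finset.sum_eq_sum_iff_of_le hle).mp hWeq
    have hfeq : ∀ m, DColl.fM J.parts m = DColl.fM q.parts m := by
      intro m
      by_cases hm : m ≤ 2*n
      · exact hptws m (Finset.mem_range.mpr (by omega))
      · rw [DColl.fM_big J (by omega), DColl.fM_big q (by omega)]
    have hJq : J = q := DColl.part_ext J q hfeq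
    rw [← hJq]
    exact hrJ
  refine ⟨q, ⟨hqD, hqp, key⟩, ?_⟩
  rintro q' ⟨hq'D, hq'p, hq'max⟩
  have h1 : DomLE q q' := hq'max q hqD hqp
  have h2 : DomLE q' q := key q' hq'D hq'p
  have g1 := (DColl.domle_iff q q').mp h1
  have g2 := (DColl.domle_iff q' q).mp h2
  apply DColl.part_ext
  intro m
  have e1 := DColl.fg q'.parts m
  have e2 := DColl.fg q.parts m
  rw [q'.parts_sum] at e1
  rw [q.parts_sum] at e2
  have := g1 m
  have := g2 m
  omega
end

section
/- The Young diagram of a partition p admits a tiling by dominoes if and only if the number of cells (i,j) of p with i + j even equals the number of cells with i + j odd. -/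
open scoped Classical

/-- The finset of cells of the Young diagram with row lengths `l`. -/
noncomputable def cellsFinset (l : List ℕ) : Finset (ℕ × ℕ) :=
  ((Finset.range l.length) ×ˢ (Finset.range (l.foldr max 0))).filter (fun c => Cell l c)

lemma adj_symm {c d : ℕ × ℕ} (h : Adj c d) : Adj d c := by
  unfold Adj at *; tauto

lemma adj_sum {c d : ℕ × ℕ} (h : Adj c d) :
    c.1 + c.2 + 1 = d.1 + d.2 ∨ d.1 + d.2 + 1 = c.1 + c.2 := by
  rcases h with ⟨h1, h2 | h2⟩ | ⟨h1, h2 | h2⟩ <;> omega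

lemma le_foldr_max {l : List ℕ} {x : ℕ} (hx : x ∈ l) : x ≤ l.foldr max 0 := by
  induction l with
  | nil => simp at hx
  | cons a t ih =>
    rcases List.mem_cons.1 hx with rfl | h
    · exact le_max_left _ _
    · exact le_trans (ih h) (le_max_right _ _)

lemma mem_cells {l : List ℕ} {c : ℕ × ℕ} : c ∈ cellsFinset l ↔ Cell l c := by
  constructor
  · intro h; exact (Finset.mem_filter.1 h).2
  · intro h
    refine Finset.mem_filter.2 ⟨Finset.mem_product.2 ⟨?_, ?_⟩, h⟩
    · simp only [Finset.mem_range]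
      by_contra hlen
      push_neg at hlen
      have : l.getD c.1 0 = 0 := by
        rw [List.getD_eq_getElem?_getD, List.getElem?_eq_none (by omega)]; rfl
      unfold Cell at h; omega
    · simp only [Finset.mem_range]
      have hlen : c.1 < l.length := by
        by_contra hlen
        push_neg at hlen
        have : l.getD c.1 0 = 0 := by
          rw [List.getD_eq_getElem?_getD, List.getElem?_eq_none (by omega)]; rfl
        unfold Cell at h; omega
      have : l.getD c.1 0 ∈ l := by
        rw [List.getD_eq_getElem?_getD, List.getElem?_eq_getElem hlen]
        exact List.getElem_mem hlen
      exact lt_of_lt_of_le h (le_foldr_max this)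

lemma getD_set {l : List ℕ} {i a v : ℕ} :
    (l.set i v).getD a 0 = if i = a ∧ i < l.length then v else l.getD a 0 := by
  rw [List.getD_eq_getElem?_getD, List.getD_eq_getElem?_getD, List.getElem?_set]
  by_cases h1 : i = a
  · subst h1
    by_cases h2 : i < l.length
    · simp [h2]
    · rw [List.getElem?_eq_none (by omega)]
      simp [h2]
  · simp [h1]

lemma getD_le_of_sorted {l : List ℕ} (h : l.Pairwise (· ≥ ·)) (i : ℕ) :
    l.getD (i+1) 0 ≤ l.getD i 0 := by
  by_cases hi : i + 1 < l.length
  · rw [List.getD_eq_getElem?_getD, List.getD_eq_getElem?_getD,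
      List.getElem?_eq_getElem hi, List.getElem?_eq_getElem (by omega : i < l.length)]
    exact h.rel_get_of_lt (by simp)
  · rw [List.getD_eq_getElem?_getD (l := l) (i := i+1), List.getElem?_eq_none (by omega)]
    exact Nat.zero_le _

lemma sorted_of_getD {l : List ℕ} (h : ∀ i, l.getD (i+1) 0 ≤ l.getD i 0) :
    l.Pairwise (· ≥ ·) := by
  rw [← List.isChain_iff_pairwise, List.isChain_iff_getElem]
  intro i hi
  have := h i
  rw [List.getD_eq_getElem?_getD, List.getD_eq_getElem?_getD,
    List.getElem?_eq_getElem (by omega : i < l.length),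
    List.getElem?_eq_getElem (by omega : i + 1 < l.length)] at this
  simpa using this

lemma parity_flip {c d : ℕ × ℕ} (h : Adj c d) (he : Even (c.1 + c.2)) : Odd (d.1 + d.2) := by
  rcases adj_sum h with h' | h'
  · rw [← h']; exact Even.add_one he
  · rcases Nat.even_or_odd (d.1 + d.2) with h2 | h2
    · exfalso; have := Even.add_one h2; rw [h'] at this; exact (Nat.not_odd_iff_even.2 he) this
    · exact h2

lemma parity_flip' {c d : ℕ × ℕ} (h : Adj c d) (he : Odd (c.1 + c.2)) : Even (d.1 + d.2) := by
  rcases adj_sum h with h' | h'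
  · rw [← h']; exact Odd.add_one he
  · rcases Nat.even_or_odd (d.1 + d.2) with h2 | h2
    · exact h2
    · exfalso; have := Odd.add_one h2; rw [h'] at this; exact (Nat.not_odd_iff_even.2 this) he

lemma balanced_of_hasTiling {l : List ℕ} (h : HasTiling l) :
    ((cellsFinset l).filter (fun c => Even (c.1 + c.2))).card =
    ((cellsFinset l).filter (fun c => Odd (c.1 + c.2))).card := by
  obtain ⟨t, ht⟩ := h
  apply Finset.card_bij' (fun c _ => t c) (fun c _ => t c)
  · intro c hc
    rw [Finset.mem_filter] at hc ⊢
    obtain ⟨hcell, hpar⟩ := hc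
    obtain ⟨h1, _, _, h4⟩ := ht c (mem_cells.1 hcell)
    exact ⟨mem_cells.2 h1, parity_flip h4 hpar⟩
  · intro c hc
    rw [Finset.mem_filter] at hc ⊢
    obtain ⟨hcell, hpar⟩ := hc
    obtain ⟨h1, _, _, h4⟩ := ht c (mem_cells.1 hcell)
    exact ⟨mem_cells.2 h1, parity_flip' h4 hpar⟩
  · intro c hc
    exact (ht c (mem_cells.1 (Finset.mem_filter.1 hc).1)).2.1
  · intro c hc
    exact (ht c (mem_cells.1 (Finset.mem_filter.1 hc).1)).2.1

lemma cells_remove {l l' : List ℕ} {c d : ℕ × ℕ}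
    (hcell : ∀ x, Cell l' x ↔ Cell l x ∧ x ≠ c ∧ x ≠ d) :
    cellsFinset l' = ((cellsFinset l).erase c).erase d := by
  ext x
  rw [mem_cells, Finset.mem_erase, Finset.mem_erase, mem_cells, hcell]
  tauto

lemma balanced_remove {l l' : List ℕ} {c d : ℕ × ℕ}
    (hc : Cell l c) (hd : Cell l d) (hadj : Adj c d)
    (hcell : ∀ x, Cell l' x ↔ Cell l x ∧ x ≠ c ∧ x ≠ d)
    (hbal : ((cellsFinset l).filter (fun c => Even (c.1 + c.2))).card =
      ((cellsFinset l).filter (fun c => Odd (c.1 + c.2))).card) :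
    ((cellsFinset l').filter (fun c => Even (c.1 + c.2))).card =
      ((cellsFinset l').filter (fun c => Odd (c.1 + c.2))).card := by
  have hne : c ≠ d := by
    intro h; subst h; rcases adj_sum hadj with h | h <;> omega
  rw [cells_remove hcell]
  rw [Finset.filter_erase, Finset.filter_erase, Finset.filter_erase, Finset.filter_erase]
  set sE := (cellsFinset l).filter (fun c => Even (c.1 + c.2)) with hsE
  set sO := (cellsFinset l).filter (fun c => Odd (c.1 + c.2)) with hsO
  rcases Nat.even_or_odd (c.1 + c.2) with hpar | hpar
  · have hdo : Odd (d.1 + d.2) := parity_flip hadj hpar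
    have hde : ¬ Even (d.1 + d.2) := Nat.not_even_iff_odd.2 hdo
    have hco : ¬ Odd (c.1 + c.2) := Nat.not_odd_iff_even.2 hpar
    have e1 : (sE.erase c).erase d = sE.erase c :=
      Finset.erase_eq_of_notMem (fun h => hde (Finset.mem_filter.1 (Finset.mem_erase.1 h).2).2)
    have e2 : sO.erase c = sO :=
      Finset.erase_eq_of_notMem (fun h => hco (Finset.mem_filter.1 h).2)
    rw [e1, e2]
    rw [Finset.card_erase_of_mem (Finset.mem_filter.2 ⟨mem_cells.2 hc, hpar⟩),
        Finset.card_erase_of_mem (Finset.mem_filter.2 ⟨mem_cells.2 hd, hdo⟩)]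
    simp only [← hsE, ← hsO]
    omega
  · have hde : Even (d.1 + d.2) := parity_flip' hadj hpar
    have hdo : ¬ Odd (d.1 + d.2) := Nat.not_odd_iff_even.2 hde
    have hce : ¬ Even (c.1 + c.2) := Nat.not_even_iff_odd.2 hpar
    have e1 : sE.erase c = sE :=
      Finset.erase_eq_of_notMem (fun h => hce (Finset.mem_filter.1 h).2)
    have e2 : (sO.erase c).erase d = sO.erase c :=
      Finset.erase_eq_of_notMem (fun h => hdo (Finset.mem_filter.1 (Finset.mem_erase.1 h).2).2)
    rw [e1, e2]
    rw [Finset.card_erase_of_mem (Finset.mem_filter.2 ⟨mem_cells.2 hd, hde⟩),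
        Finset.card_erase_of_mem (Finset.mem_filter.2 ⟨mem_cells.2 hc, hpar⟩)]
    simp only [← hsE, ← hsO]
    omega

lemma tiling_extend {l l' : List ℕ} {c d : ℕ × ℕ}
    (hc : Cell l c) (hd : Cell l d) (hadj : Adj c d)
    (hcell : ∀ x, Cell l' x ↔ Cell l x ∧ x ≠ c ∧ x ≠ d)
    (ht : HasTiling l') : HasTiling l := by
  have hne : c ≠ d := by
    intro h; subst h; rcases adj_sum hadj with h | h <;> omega
  obtain ⟨t, ht⟩ := ht
  set T : ℕ × ℕ → ℕ × ℕ := fun x => if x = c then d else if x = d then c else t x with hT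
  have hTc : T c = d := by rw [hT]; simp
  have hTd : T d = c := by rw [hT]; simp [Ne.symm hne]
  have hTx : ∀ x, x ≠ c → x ≠ d → T x = t x := by
    intro x h1 h2; rw [hT]; simp [h1, h2]
  refine ⟨T, ?_⟩
  intro x hx
  by_cases h1 : x = c
  · subst h1
    rw [hTc, hTd]
    exact ⟨hd, rfl, Ne.symm hne, hadj⟩
  · by_cases h2 : x = d
    · subst h2
      rw [hTd, hTc]
      exact ⟨hc, rfl, hne, adj_symm hadj⟩
    · have hx' : Cell l' x := (hcell x).2 ⟨hx, h1, h2⟩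
      obtain ⟨p1, p2, p3, p4⟩ := ht x hx'
      have htx := (hcell (t x)).1 p1
      rw [hTx x h1 h2, hTx (t x) htx.2.1 htx.2.2]
      exact ⟨htx.1, p2, p3, p4⟩

noncomputable def SQ (k : ℕ) : Finset (ℕ × ℕ) :=
  (Finset.range k ×ˢ Finset.range k).filter (fun c => c.1 + c.2 < k)

lemma mem_SQ {k : ℕ} {c : ℕ × ℕ} : c ∈ SQ k ↔ c.1 + c.2 < k := by
  simp only [SQ, Finset.mem_filter, Finset.mem_product, Finset.mem_range]
  omega

noncomputable def DG (k : ℕ) : Finset (ℕ × ℕ) :=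
  (Finset.range (k+1)).image (fun i => (i, k - i))

lemma mem_DG {k : ℕ} {c : ℕ × ℕ} : c ∈ DG k ↔ c.1 + c.2 = k := by
  simp only [DG, Finset.mem_image, Finset.mem_range]
  constructor
  · rintro ⟨i, hi, rfl⟩; simp; omega
  · intro h; exact ⟨c.1, by omega, by rw [Prod.ext_iff]; constructor <;> simp <;> omega⟩

lemma card_DG (k : ℕ) : (DG k).card = k + 1 := by
  rw [DG, Finset.card_image_of_injOn (fun a _ b _ h => congrArg Prod.fst h)]
  simp

lemma SQ_succ (k : ℕ) : SQ (k+1) = SQ k ∪ DG k := by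
  ext c
  rw [mem_SQ, Finset.mem_union, mem_SQ, mem_DG]
  omega

lemma SQ_DG_disj (k : ℕ) : Disjoint (SQ k) (DG k) := by
  rw [Finset.disjoint_left]
  intro c h1 h2
  rw [mem_SQ] at h1; rw [mem_DG] at h2; omega

lemma SQ_balance (k : ℕ) :
    (Even k → ((SQ k).filter (fun c => Odd (c.1+c.2))).card
      = ((SQ k).filter (fun c => Even (c.1+c.2))).card + k/2) ∧
    (¬ Even k → ((SQ k).filter (fun c => Even (c.1+c.2))).card
      = ((SQ k).filter (fun c => Odd (c.1+c.2))).card + (k+1)/2) := by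
  induction k with
  | zero =>
    constructor
    · intro _; simp [SQ]
    · intro h; exact absurd Even.zero h
  | succ k ih =>
    have hE : ((SQ (k+1)).filter (fun c => Even (c.1+c.2))).card
        = ((SQ k).filter (fun c => Even (c.1+c.2))).card
          + ((DG k).filter (fun c => Even (c.1+c.2))).card := by
      rw [SQ_succ, Finset.filter_union,
        Finset.card_union_of_disjoint (Finset.disjoint_filter_filter (SQ_DG_disj k))]
    have hO : ((SQ (k+1)).filter (fun c => Odd (c.1+c.2))).card
        = ((SQ k).filter (fun c => Odd (c.1+c.2))).card
          + ((DG k).filter (fun c => Odd (c.1+c.2))).card := by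
      rw [SQ_succ, Finset.filter_union,
        Finset.card_union_of_disjoint (Finset.disjoint_filter_filter (SQ_DG_disj k))]
    by_cases hk : Even k
    · have hDE : ((DG k).filter (fun c => Even (c.1+c.2))) = DG k :=
        Finset.filter_true_of_mem (fun c hc => (mem_DG.1 hc) ▸ hk)
      have hDO : ((DG k).filter (fun c => Odd (c.1+c.2))) = ∅ :=
        Finset.filter_false_of_mem (fun c hc => (mem_DG.1 hc) ▸ (Nat.not_odd_iff_even.2 hk))
      rw [hDE, card_DG] at hE
      rw [hDO] at hO
      constructor
      · intro h; exfalso; rw [Nat.even_add_one] at h; exact h hk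
      · intro _
        have := ih.1 hk
        obtain ⟨m, hm⟩ := hk
        rw [hE, hO]
        simp only [Finset.card_empty]
        omega
    · have hko : Odd k := Nat.not_even_iff_odd.1 hk
      have hDE : ((DG k).filter (fun c => Even (c.1+c.2))) = ∅ :=
        Finset.filter_false_of_mem (fun c hc => (mem_DG.1 hc) ▸ (Nat.not_even_iff_odd.2 hko))
      have hDO : ((DG k).filter (fun c => Odd (c.1+c.2))) = DG k :=
        Finset.filter_true_of_mem (fun c hc => (mem_DG.1 hc) ▸ hko)
      rw [hDE] at hE
      rw [hDO, card_DG] at hO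
      constructor
      · intro _
        have := ih.2 hk
        obtain ⟨m, hm⟩ := hko
        rw [hE, hO]
        simp only [Finset.card_empty]
        omega
      · intro h; exact absurd (Nat.even_add_one.2 hk) h
  
lemma SQ_unbalanced {k : ℕ} (hk : 0 < k) :
    ((SQ k).filter (fun c => Even (c.1+c.2))).card
      ≠ ((SQ k).filter (fun c => Odd (c.1+c.2))).card := by
  by_cases h : Even k
  · have := (SQ_balance k).1 h
    obtain ⟨m, hm⟩ := h
    omega
  · have := (SQ_balance k).2 h
    omega

lemma set_getD_self {l : List ℕ} {i : ℕ} : l.set i (l.getD i 0) = l := by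
  apply List.ext_getElem?
  intro n
  rw [List.getElem?_set]
  split_ifs with h1 h2
  · subst h1
    rw [List.getD_eq_getElem?_getD, List.getElem?_eq_getElem h2]
    rfl
  · subst h1
    rw [List.getElem?_eq_none (by omega)]
  · rfl

lemma sum_set_add {l : List ℕ} {i v : ℕ} (h : i < l.length) :
    (l.set i v).sum + l.getD i 0 = l.sum + v := by
  have h1 := List.sum_set l i v
  have h2 := List.sum_set l i (l.getD i 0)
  rw [set_getD_self] at h2
  rw [if_pos h] at h1 h2
  omega

lemma getD_anti {l : List ℕ} (hs : l.Pairwise (· ≥ ·)) {i j : ℕ} (hij : i ≤ j) :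
    l.getD j 0 ≤ l.getD i 0 := by
  induction j with
  | zero => simp_all
  | succ j ih =>
    rcases Nat.lt_or_ge i (j+1) with h | h
    · exact le_trans (getD_le_of_sorted hs j) (ih (by omega))
    · have : i = j + 1 := by omega
      subst this; rfl

lemma getD_pos_lt_length {l : List ℕ} {i : ℕ} (h : 0 < l.getD i 0) : i < l.length := by
  by_contra hc
  push_neg at hc
  rw [List.getD_eq_getElem?_getD, List.getElem?_eq_none (by omega)] at h
  simp at h

lemma descent {l : List ℕ} (hs : l.Pairwise (· ≥ ·))
    (H2 : ∀ i, ¬(l.getD i 0 = l.getD (i+1) 0 ∧ 0 < l.getD i 0 ∧ l.getD (i+2) 0 < l.getD i 0)) :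
    ∀ d i, l.getD i 0 = l.getD (i+1) 0 → 0 < l.getD i 0 → l.length ≤ i + d → False := by
  intro d
  induction d with
  | zero =>
    intro i heq hpos hlen
    rw [List.getD_eq_getElem?_getD, List.getElem?_eq_none (by omega)] at hpos
    simp at hpos
  | succ d ih =>
    intro i heq hpos hlen
    by_cases h3 : l.getD (i+2) 0 < l.getD i 0
    · exact H2 i ⟨heq, hpos, h3⟩
    · push_neg at h3
      have h4 : l.getD (i+2) 0 ≤ l.getD (i+1) 0 := getD_le_of_sorted hs (i+1)
      exact ih (i+1) (by rw [show i+1+1 = i+2 from rfl]; omega) (by omega) (by omega)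

lemma staircase_getD {l : List ℕ} (hs : l.Pairwise (· ≥ ·))
    (H1 : ∀ i, l.getD i 0 < l.getD (i+1) 0 + 2)
    (H2 : ∀ i, ¬(l.getD i 0 = l.getD (i+1) 0 ∧ 0 < l.getD i 0 ∧ l.getD (i+2) 0 < l.getD i 0)) :
    ∀ i, l.getD i 0 = l.getD 0 0 - i := by
  have step : ∀ i, 0 < l.getD i 0 → l.getD (i+1) 0 + 1 = l.getD i 0 := by
    intro i hpos
    have h1 := H1 i
    have h2 := getD_le_of_sorted hs i
    rcases Nat.lt_or_ge (l.getD (i+1) 0) (l.getD i 0) with h | h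
    · omega
    · exfalso
      exact descent hs H2 l.length i (by omega) hpos (by omega)
  intro i
  induction i with
  | zero => simp
  | succ i ih =>
    by_cases hpos : 0 < l.getD i 0
    · have := step i hpos
      omega
    · have h2 := getD_le_of_sorted hs i
      omega

lemma cell_iff {l : List ℕ} {a b : ℕ} : Cell l (a, b) ↔ b < l.getD a 0 := Iff.rfl

lemma remove_horiz {l : List ℕ} (hs : l.Pairwise (· ≥ ·)) {i : ℕ}
    (hi : l.getD (i+1) 0 + 2 ≤ l.getD i 0) :
    ∃ (l' : List ℕ) (c d : ℕ × ℕ), Adj c d ∧ Cell l c ∧ Cell l d ∧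
      l'.Pairwise (· ≥ ·) ∧ l'.sum + 2 = l.sum ∧
      (∀ x, Cell l' x ↔ Cell l x ∧ x ≠ c ∧ x ≠ d) := by
  have hlen : i < l.length := getD_pos_lt_length (by omega)
  refine ⟨l.set i (l.getD i 0 - 2), (i, l.getD i 0 - 2), (i, l.getD i 0 - 1), ?_, ?_, ?_, ?_, ?_, ?_⟩
  · exact Or.inl ⟨rfl, Or.inl (by omega)⟩
  · exact cell_iff.2 (by omega)
  · exact cell_iff.2 (by omega)
  · apply sorted_of_getD
    intro a
    rw [getD_set, getD_set]
    by_cases e1 : i = a + 1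
    · rw [if_pos (show i = a + 1 ∧ i < l.length from ⟨e1, hlen⟩),
        if_neg (show ¬(i = a ∧ i < l.length) from fun h => by omega)]
      have h2 : l.getD i 0 ≤ l.getD a 0 := by rw [e1]; exact getD_le_of_sorted hs a
      omega
    · by_cases e2 : i = a
      · rw [if_neg (fun h => e1 h.1), if_pos (show i = a ∧ i < l.length from ⟨e2, hlen⟩)]
        have h2 : l.getD (i + 1) 0 = l.getD (a + 1) 0 := by rw [e2]
        omega
      · rw [if_neg (fun h => e1 h.1), if_neg (fun h => e2 h.1)]
        exact getD_le_of_sorted hs a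
  · have := sum_set_add (v := l.getD i 0 - 2) hlen
    omega
  · rintro ⟨a, b⟩
    rw [cell_iff, cell_iff, getD_set, ne_eq, Prod.mk.injEq, ne_eq, Prod.mk.injEq]
    by_cases e : i = a
    · rw [if_pos (show i = a ∧ i < l.length from ⟨e, hlen⟩)]
      subst e
      omega
    · rw [if_neg (fun h => e h.1)]
      have : ¬ (a = i) := fun h => e h.symm
      omega

lemma remove_vert {l : List ℕ} (hs : l.Pairwise (· ≥ ·)) {i : ℕ}
    (h1 : l.getD i 0 = l.getD (i+1) 0) (h2 : 0 < l.getD i 0)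
    (h3 : l.getD (i+2) 0 < l.getD i 0) :
    ∃ (l' : List ℕ) (c d : ℕ × ℕ), Adj c d ∧ Cell l c ∧ Cell l d ∧
      l'.Pairwise (· ≥ ·) ∧ l'.sum + 2 = l.sum ∧
      (∀ x, Cell l' x ↔ Cell l x ∧ x ≠ c ∧ x ≠ d) := by
  have hlen : i < l.length := getD_pos_lt_length h2
  have hlen1 : i + 1 < l.length := getD_pos_lt_length (by omega)
  have hgetD : ∀ a, ((l.set i (l.getD i 0 - 1)).set (i+1) (l.getD i 0 - 1)).getD a 0 =
      if a = i ∨ a = i + 1 then l.getD i 0 - 1 else l.getD a 0 := by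
    intro a
    rw [getD_set, List.length_set, getD_set]
    by_cases e1 : a = i + 1
    · rw [if_pos (show i + 1 = a ∧ i + 1 < l.length from ⟨e1.symm, hlen1⟩),
        if_pos (Or.inr e1)]
    · rw [if_neg (show ¬(i + 1 = a ∧ i + 1 < l.length) from fun h => e1 h.1.symm)]
      by_cases e2 : a = i
      · rw [if_pos (show i = a ∧ i < l.length from ⟨e2.symm, hlen⟩), if_pos (Or.inl e2)]
      · rw [if_neg (show ¬(i = a ∧ i < l.length) from fun h => e2 h.1.symm),
          if_neg (show ¬(a = i ∨ a = i + 1) from fun h => h.elim e2 e1)]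
  refine ⟨(l.set i (l.getD i 0 - 1)).set (i+1) (l.getD i 0 - 1),
    (i, l.getD i 0 - 1), (i+1, l.getD i 0 - 1), ?_, ?_, ?_, ?_, ?_, ?_⟩
  · exact Or.inr ⟨rfl, Or.inl rfl⟩
  · exact cell_iff.2 (by omega)
  · exact cell_iff.2 (by omega)
  · apply sorted_of_getD
    intro a
    rw [hgetD, hgetD]
    have ha := getD_le_of_sorted hs a
    by_cases e1 : a + 1 = i
    · rw [if_pos (Or.inl e1), if_neg (by omega : ¬(a = i ∨ a = i + 1))]
      have hb : l.getD (a + 1) 0 = l.getD i 0 := by rw [e1]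
      omega
    · by_cases e2 : a + 1 = i + 1
      · rw [if_pos (Or.inr e2), if_pos (Or.inl (by omega : a = i))]
      · by_cases e3 : a = i + 1
        · rw [if_neg (by omega : ¬(a + 1 = i ∨ a + 1 = i + 1)), if_pos (Or.inr e3)]
          have hb : l.getD (a + 1) 0 = l.getD (i + 2) 0 := by rw [e3]
          omega
        · rw [if_neg (by omega : ¬(a + 1 = i ∨ a + 1 = i + 1)),
            if_neg (by omega : ¬(a = i ∨ a = i + 1))]
          exact ha
  · have s1 := sum_set_add (v := l.getD i 0 - 1) hlen
    have s2 := sum_set_add (l := l.set i (l.getD i 0 - 1)) (i := i + 1) (v := l.getD i 0 - 1)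
      (by rw [List.length_set]; exact hlen1)
    rw [getD_set, if_neg (by omega : ¬(i = i + 1 ∧ i < l.length))] at s2
    omega
  · rintro ⟨a, b⟩
    rw [cell_iff, cell_iff, hgetD, ne_eq, Prod.mk.injEq, ne_eq, Prod.mk.injEq]
    by_cases e1 : a = i
    · rw [if_pos (Or.inl e1)]
      subst e1
      omega
    · by_cases e2 : a = i + 1
      · rw [if_pos (Or.inr e2)]
        subst e2
        have hb : l.getD (i + 1) 0 = l.getD i 0 := h1.symm
        omega
      · rw [if_neg (show ¬(a = i ∨ a = i + 1) from fun h => h.elim e1 e2)]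
        omega

lemma hasTiling_of_balanced : ∀ (n : ℕ) (l : List ℕ), l.sum = n → l.Pairwise (· ≥ ·) →
    ((cellsFinset l).filter (fun c => Even (c.1 + c.2))).card =
      ((cellsFinset l).filter (fun c => Odd (c.1 + c.2))).card → HasTiling l := by
  intro n
  induction n using Nat.strong_induction_on with
  | _ n ih =>
  intro l hsum hs hbal
  by_cases hzero : l.getD 0 0 = 0
  · refine ⟨id, fun c hc => absurd hc ?_⟩
    have : l.getD c.1 0 ≤ l.getD 0 0 := getD_anti hs (Nat.zero_le _)
    unfold Cell
    omega
  · by_cases hH : ∃ i, l.getD (i+1) 0 + 2 ≤ l.getD i 0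
    · obtain ⟨i, hi⟩ := hH
      obtain ⟨l', c, d, hadj, hc, hd, hsort', hsum', hcell⟩ := remove_horiz hs hi
      have hlt : l'.sum < n := by omega
      exact tiling_extend hc hd hadj hcell
        (ih l'.sum hlt l' rfl hsort' (balanced_remove hc hd hadj hcell hbal))
    · by_cases hV : ∃ i, l.getD i 0 = l.getD (i+1) 0 ∧ 0 < l.getD i 0 ∧ l.getD (i+2) 0 < l.getD i 0
      · obtain ⟨i, h1, h2, h3⟩ := hV
        obtain ⟨l', c, d, hadj, hc, hd, hsort', hsum', hcell⟩ := remove_vert hs h1 h2 h3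
        have hlt : l'.sum < n := by omega
        exact tiling_extend hc hd hadj hcell
          (ih l'.sum hlt l' rfl hsort' (balanced_remove hc hd hadj hcell hbal))
      · exfalso
        push_neg at hH
        have hst := staircase_getD hs (fun i => by have := hH i; omega)
          (fun i h => hV ⟨i, h⟩)
        have hSQ : cellsFinset l = SQ (l.getD 0 0) := by
          ext ⟨a, b⟩
          rw [mem_cells, mem_SQ, cell_iff, hst a]
          omega
        rw [hSQ] at hbal
        exact SQ_unbalanced (by omega) hbal

/-- The Young diagram of a partition admits a domino tiling if and only if the
number of its cells `(i, j)` with `i + j` even equals the number of cells with `i + j` odd. -/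
theorem tileable_iff_balanced (N : ℕ) (p : N.Partition) :
    HasTiling (partList p) ↔
      ((cellsFinset (partList p)).filter (fun c => Even (c.1 + c.2))).card =
      ((cellsFinset (partList p)).filter (fun c => Odd (c.1 + c.2))).card := by
  constructor
  · exact balanced_of_hasTiling
  · intro hbal
    apply hasTiling_of_balanced (partList p).sum _ rfl _ hbal
    rw [partList, List.pairwise_reverse]
    exact (Multiset.pairwise_sort p.parts (· ≤ ·)).imp (fun h => h)
end

section
/- A partition p of 2n in which every even part occurs with even multiplicity (a D-partition) has empty 2-core, i.e., its Young diagram can be tiled by dominoes. -/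
open scoped Classical

lemma glue {l l' : List ℕ} {c d : ℕ × ℕ} (hne : c ≠ d) (hadj : Adj c d)
    (hiff : ∀ x, Cell l x ↔ Cell l' x ∨ x = c ∨ x = d)
    (hc : ¬ Cell l' c) (hd : ¬ Cell l' d) (h : HasTiling l') : HasTiling l := by
  obtain ⟨t, ht⟩ := h
  set f : ℕ × ℕ → ℕ × ℕ := fun x => if x = c then d else if x = d then c else t x with hf
  have hfc : f c = d := by simp [hf]
  have hfd : f d = c := by simp [hf, Ne.symm hne]
  have hfo : ∀ x, x ≠ c → x ≠ d → f x = t x := by intro x h1 h2; simp [hf, h1, h2]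
  refine ⟨f, ?_⟩
  intro x hx
  by_cases h1 : x = c
  · subst h1
    rw [hfc, hfd]
    exact ⟨(hiff d).2 (Or.inr (Or.inr rfl)), rfl, Ne.symm hne, hadj⟩
  · by_cases h2 : x = d
    · subst h2
      rw [hfd, hfc]
      exact ⟨(hiff c).2 (Or.inr (Or.inl rfl)), rfl, hne, adj_symm hadj⟩
    · have hx' : Cell l' x := by
        rcases (hiff x).1 hx with h' | h' | h'
        · exact h'
        · exact absurd h' h1
        · exact absurd h' h2
      obtain ⟨hc1, hc2, hc3, hc4⟩ := ht x hx'
      have htc : t x ≠ c := fun h => hc (h ▸ hc1)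
      have htd : t x ≠ d := fun h => hd (h ▸ hc1)
      rw [hfo x h1 h2, hfo _ htc htd]
      exact ⟨(hiff _).2 (Or.inl hc1), hc2, hc3, hc4⟩

lemma getD_rep_append (k a : ℕ) (t : List ℕ) (i : ℕ) :
    (List.replicate k a ++ t).getD i 0 = if i < k then a else t.getD (i - k) 0 := by
  split <;> rename_i h
  · rw [List.getD_append _ _ _ _ (by simpa using h)]
    rw [List.getD_eq_getElem?_getD]
    simp [List.getElem?_replicate, h]
  · rw [List.getD_append_right _ _ _ _ (by simpa using h)]
    simp

lemma run_extract : ∀ (l : List ℕ), l.Pairwise (· ≥ ·) → ∀ a, (∀ x ∈ l, x ≤ a) →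
    ∃ k t, l = List.replicate k a ++ t ∧ (∀ x ∈ t, x < a) := by
  intro l
  induction l with
  | nil => exact fun _ a _ => ⟨0, [], rfl, by simp⟩
  | cons x xs ih =>
    intro hs a hle
    rcases eq_or_lt_of_le (hle x (by simp)) with h | h
    · subst h
      obtain ⟨k, t, h1, h2⟩ := ih hs.of_cons x (fun y hy => List.rel_of_pairwise_cons hs hy)
      exact ⟨k + 1, t, by rw [List.replicate_succ, List.cons_append, h1], h2⟩
    · refine ⟨0, x :: xs, rfl, fun y hy => ?_⟩
      rcases List.mem_cons.1 hy with rfl | hy'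
      · exact h
      · exact lt_of_le_of_lt (List.rel_of_pairwise_cons hs hy') h

lemma sorted_helper {a k2 : ℕ} {t : List ℕ} (hst : t.Pairwise (· ≥ ·))
    (ht : ∀ x ∈ t, x < a) :
    (List.replicate k2 a ++ (List.replicate 2 (a-1) ++ t)).Pairwise (· ≥ ·) := by
  rw [List.pairwise_append, List.pairwise_append]
  refine ⟨List.pairwise_replicate.2 (Or.inr le_rfl),
    ⟨List.pairwise_replicate.2 (Or.inr le_rfl), hst, ?_⟩, ?_⟩
  · intro x hx y hy
    rw [List.mem_replicate] at hx
    have := ht y hy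
    omega
  · intro x hx y hy
    rw [List.mem_replicate] at hx
    rcases List.mem_append.1 hy with hy | hy
    · rw [List.mem_replicate] at hy; omega
    · have := ht y hy; omega

lemma main : ∀ (N : ℕ) (l : List ℕ), l.sum = N → l.Pairwise (· ≥ ·) →
    (∀ x ∈ l, 0 < x) → Even N → (∀ m ∈ l, Even m → Even (l.count m)) → HasTiling l := by
  intro N
  induction N using Nat.strong_induction_on with
  | _ N IH =>
  intro l hsum hsorted hpos hev hD
  rcases hl : l with _ | ⟨a, rest⟩
  · exact ⟨id, fun c hc => absurd hc (by simp [Cell])⟩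
  subst hl
  have hha : ∀ x ∈ a :: rest, x ≤ a := by
    intro x hx
    rcases List.mem_cons.1 hx with rfl | hx'
    · exact le_rfl
    · exact List.rel_of_pairwise_cons hsorted hx'
  obtain ⟨k, t, heq, ht⟩ := run_extract (a :: rest) hsorted a hha
  have hapos : 0 < a := hpos a (by simp)
  have hk : 1 ≤ k := by
    by_contra h
    have hk0 : k = 0 := by omega
    subst hk0
    simp only [List.replicate_zero, List.nil_append] at heq
    exact absurd (ht a (heq ▸ (by simp : a ∈ a :: rest))) (lt_irrefl a)
  have htl : ∀ x ∈ t, x ∈ a :: rest := by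
    intro x hx; rw [heq]; exact List.mem_append_right _ hx
  have hst : t.Pairwise (· ≥ ·) := by
    have := heq ▸ hsorted
    exact this.sublist (List.sublist_append_right _ _)
  have hsum' : k * a + t.sum = N := by
    rw [heq] at hsum
    simpa [List.sum_append, List.sum_replicate, smul_eq_mul] using hsum
  have hcount : ∀ m, (a :: rest).count m = (if a = m then k else 0) + t.count m := by
    intro m; rw [heq]; simp [List.count_append, List.count_replicate]
  have hcta : t.count a = 0 := List.count_eq_zero.2 (fun h => lt_irrefl a (ht a h))
  have hev2 : N % 2 = 0 := Nat.even_iff.1 hev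
  have gl : ∀ i, (a :: rest).getD i 0 = if i < k then a else t.getD (i - k) 0 := by
    intro i; rw [heq]; exact getD_rep_append k a t i
  by_cases hk2 : 2 ≤ k
  · -- first run has at least two rows: remove a vertical domino from its last two rows
    by_cases ha2 : 2 ≤ a
    · set l' : List ℕ := List.replicate (k-2) a ++ (List.replicate 2 (a-1) ++ t) with hl'
      have gl' : ∀ i, l'.getD i 0 =
          if i < k - 2 then a else if i - (k-2) < 2 then a - 1 else t.getD (i - k) 0 := by
        intro i
        rw [hl', getD_rep_append, getD_rep_append]
        by_cases h1 : i < k - 2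
        · simp [h1]
        · simp only [if_neg h1]
          by_cases h2 : i - (k-2) < 2
          · simp [h2]
          · simp only [if_neg h2]
            congr 1
            omega
      have h2a : 2 * a ≤ k * a := Nat.mul_le_mul_right a (by omega)
      apply glue (l' := l') (c := ((k-2 : ℕ), (a-1 : ℕ))) (d := ((k-1 : ℕ), (a-1 : ℕ)))
      · simp only [ne_eq, Prod.mk.injEq, not_and]; omega
      · exact Or.inr ⟨rfl, Or.inl (by omega)⟩
      · rintro ⟨i, j⟩
        simp only [Cell, gl, gl', Prod.mk.injEq]
        split_ifs <;> omega
      · simp only [Cell, gl']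
        split_ifs <;> omega
      · simp only [Cell, gl']
        split_ifs <;> omega
      · apply IH (N - 2) (by omega)
        · rw [hl']
          simp only [List.sum_append, List.sum_replicate, smul_eq_mul]
          rw [Nat.sub_mul]
          omega
        · exact sorted_helper hst ht
        · intro x hx
          rw [hl'] at hx
          rcases List.mem_append.1 hx with hx | hx
          · rw [List.mem_replicate] at hx; omega
          · rcases List.mem_append.1 hx with hx | hx
            · rw [List.mem_replicate] at hx; omega
            · exact hpos x (htl x hx)
        · exact Nat.even_iff.2 (by omega)
        · intro m hm hme
          have hcl' : l'.count m = (if a = m then k - 2 else 0) +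
              ((if a - 1 = m then 2 else 0) + t.count m) := by
            rw [hl']
            simp only [List.count_append, List.count_replicate, beq_iff_eq]
          by_cases hma : m = a
          · have hka := hD m (hma ▸ (by simp : a ∈ a :: rest)) hme
            have h1 : t.count m = 0 := by rw [hma]; exact hcta
            rw [hcount m, if_pos hma.symm, h1, add_zero] at hka
            rw [hcl', if_pos hma.symm, if_neg (by omega : ¬ a - 1 = m), h1]
            rw [Nat.even_iff] at hka ⊢
            omega
          · by_cases hmb : m = a - 1
            · have hct : Even (t.count m) := by
                by_cases hmt : m ∈ t
                · have h2 := hD m (htl m hmt) hme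
                  rw [hcount m, if_neg (Ne.symm hma), zero_add] at h2
                  exact h2
                · simp [List.count_eq_zero.2 hmt]
              rw [hcl', if_neg (Ne.symm hma), if_pos hmb.symm, zero_add]
              rw [Nat.even_iff] at hct ⊢
              omega
            · have hmt : m ∈ t := by
                rw [hl'] at hm
                rcases List.mem_append.1 hm with hm | hm
                · rw [List.mem_replicate] at hm; exact absurd hm.2 hma
                · rcases List.mem_append.1 hm with hm | hm
                  · rw [List.mem_replicate] at hm; exact absurd hm.2 hmb
                  · exact hm
              have h2 := hD m (htl m hmt) hme
              rw [hcount m, if_neg (Ne.symm hma), zero_add] at h2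
              rw [hcl', if_neg (Ne.symm hma), if_neg (Ne.symm hmb), zero_add, zero_add]
              exact h2
    · -- a = 1 : the whole diagram is a single column of even height
      have ha1 : a = 1 := by omega
      have ht0 : t = [] := by
        cases t with
        | nil => rfl
        | cons x xs =>
          have h1 := ht x (by simp)
          have h2 := hpos x (htl x (by simp))
          omega
      have hkN : k = N := by
        rw [ha1, ht0] at hsum'
        simpa using hsum'
      refine ⟨fun x => if x.1 % 2 = 0 then (x.1 + 1, x.2) else (x.1 - 1, x.2), ?_⟩
      rintro ⟨i, j⟩ hcell
      rw [Cell, gl] at hcell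
      have hij : i < k ∧ j = 0 := by
        by_cases h : i < k
        · rw [if_pos h] at hcell; omega
        · rw [if_neg h, ht0, List.getD_nil] at hcell; omega
      by_cases hpar : i % 2 = 0
      · simp only [if_pos hpar]
        refine ⟨?_, ?_, ?_, ?_⟩
        · rw [Cell, gl, if_pos (by omega : i + 1 < k)]; omega
        · simp only [if_neg (by omega : ¬ (i + 1) % 2 = 0)]
          simp
        · intro h
          rw [Prod.ext_iff] at h
          simp at h
        · exact Or.inr ⟨rfl, Or.inl rfl⟩
      · simp only [if_neg hpar]
        refine ⟨?_, ?_, ?_, ?_⟩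
        · rw [Cell, gl, if_pos (by omega : i - 1 < k)]; omega
        · simp only [if_pos (by omega : (i - 1) % 2 = 0)]
          rw [Prod.ext_iff]
          simp
          omega
        · intro h
          rw [Prod.ext_iff] at h
          simp at h
          omega
        · exact Or.inr ⟨rfl, Or.inr (by simp; omega)⟩
  · -- k = 1 : the largest part occurs once, hence is odd
    have hk1 : k = 1 := by omega
    have hrt : rest = t := by
      rw [hk1, List.replicate_one] at heq
      simpa using heq
    subst hrt
    have haodd : a % 2 = 1 := by
      by_contra h
      have hea : Even a := Nat.even_iff.2 (by omega)
      have h2 := hD a (by simp) hea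
      rw [hcount a, if_pos rfl, hcta, add_zero, hk1] at h2
      have := Nat.even_iff.1 h2
      omega
    cases rest with
    | nil =>
      exfalso
      simp only [List.sum_cons, List.sum_nil, add_zero] at hsum
      omega
    | cons b t₂ =>
      have hb : b < a := ht b (by simp)
      have hbpos : 0 < b := hpos b (by simp)
      have hsum2 : a + (b + t₂.sum) = N := by simpa using hsum
      by_cases hab : b + 2 ≤ a
      · -- remove a horizontal domino from the end of the first row
        apply glue (l' := (a-2) :: b :: t₂) (c := ((0:ℕ), a-2)) (d := ((0:ℕ), a-1))
        · simp only [ne_eq, Prod.mk.injEq, not_and]; omega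
        · exact Or.inl ⟨rfl, Or.inl (by omega)⟩
        · rintro ⟨i, j⟩
          cases i with
          | zero => simp only [Cell, List.getD_cons_zero, Prod.mk.injEq, true_and, false_and, and_true]; omega
          | succ i => simp only [Cell, List.getD_cons_succ, Prod.mk.injEq, true_and, false_and, and_true]; omega
        · simp only [Cell, List.getD_cons_zero]; omega
        · simp only [Cell, List.getD_cons_zero]; omega
        · apply IH (N - 2) (by omega)
          · simp only [List.sum_cons] at *
            omega
          · rw [List.pairwise_cons]
            refine ⟨?_, hsorted.of_cons⟩
            intro y hy
            rcases List.mem_cons.1 hy with rfl | hy'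
            · omega
            · have := List.rel_of_pairwise_cons hsorted.of_cons hy'
              omega
          · intro x hx
            rcases List.mem_cons.1 hx with rfl | hx'
            · omega
            · exact hpos x (by simp [hx'])
          · exact Nat.even_iff.2 (by omega)
          · intro m hm hme
            have hm2 : m % 2 = 0 := Nat.even_iff.1 hme
            have hmem : m ∈ b :: t₂ := by
              rcases List.mem_cons.1 hm with rfl | hx'
              · omega
              · exact hx'
            have h2 := hD m (by simp [hmem]) hme
            have e1 : ((a-2) :: b :: t₂).count m = (b :: t₂).count m := by
              rw [List.count_cons]
              simp [show ¬ (a - 2 = m) by omega]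
            have e2 : (a :: b :: t₂).count m = (b :: t₂).count m := by
              rw [List.count_cons]
              simp [show ¬ (a = m) by omega]
            rw [e1, ← e2]
            exact h2
      · -- a = b + 1 with b even: remove a vertical domino from the end of the b-run
        have hab1 : a = b + 1 := by omega
        have hbe : b % 2 = 0 := by omega
        have hb2 : 2 ≤ b := by omega
        obtain ⟨m, u, hequ, hu⟩ := run_extract (b :: t₂) hst b (by
          intro x hx
          rcases List.mem_cons.1 hx with rfl | h
          · exact le_rfl
          · exact List.rel_of_pairwise_cons hst h)
        have hm1 : 1 ≤ m := by
          by_contra h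
          have hm0 : m = 0 := by omega
          subst hm0
          simp only [List.replicate_zero, List.nil_append] at hequ
          exact absurd (hu b (hequ ▸ (by simp : b ∈ b :: t₂))) (lt_irrefl b)
        have hcbu : u.count b = 0 := List.count_eq_zero.2 (fun h => lt_irrefl b (hu b h))
        have huel : ∀ x ∈ u, x ∈ b :: t₂ := by
          intro x hx; rw [hequ]; exact List.mem_append_right _ hx
        have hsu : u.Pairwise (· ≥ ·) := by
          have h0 := hequ ▸ hst
          exact h0.sublist (List.sublist_append_right _ _)
        have hcb : (b :: t₂).count b = m := by
          rw [hequ]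
          simp [List.count_append, List.count_replicate, hcbu]
        have hmev : m % 2 = 0 := by
          have h2 := hD b (by simp) (Nat.even_iff.2 hbe)
          rw [hcount b, if_neg (by omega : ¬ a = b), zero_add, hcb] at h2
          exact Nat.even_iff.1 h2
        have hm2 : 2 ≤ m := by omega
        have hsbt : (b :: t₂).sum = m * b + u.sum := by
          rw [hequ]
          simp [List.sum_append, List.sum_replicate, smul_eq_mul]
        have hsumN : a + (m * b + u.sum) = N := by
          have h0 : a + (b :: t₂).sum = N := by simpa using hsum
          rw [hsbt] at h0
          exact h0
        have h2b : 2 * b ≤ m * b := Nat.mul_le_mul_right b (by omega)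
        set l' : List ℕ := a :: (List.replicate (m-2) b ++ (List.replicate 2 (b-1) ++ u)) with hl'
        have glC : ∀ i, (a :: b :: t₂).getD i 0 =
            if i = 0 then a else if i - 1 < m then b else u.getD (i - 1 - m) 0 := by
          intro i
          cases i with
          | zero => simp
          | succ i =>
            rw [List.getD_cons_succ, hequ, getD_rep_append]
            simp only [if_neg (by omega : ¬ i + 1 = 0), Nat.add_sub_cancel]
        have glC' : ∀ i, l'.getD i 0 =
            if i = 0 then a else if i - 1 < m - 2 then b
            else if i - 1 - (m-2) < 2 then b - 1 else u.getD (i - 1 - m) 0 := by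
          intro i
          cases i with
          | zero => simp [hl']
          | succ i =>
            rw [hl', List.getD_cons_succ, getD_rep_append, getD_rep_append]
            simp only [if_neg (by omega : ¬ i + 1 = 0), Nat.add_sub_cancel,
              List.length_replicate]
            by_cases h1 : i < m - 2
            · simp [h1]
            · simp only [if_neg h1]
              by_cases h2 : i - (m-2) < 2
              · simp [h2]
              · simp only [if_neg h2]
                congr 1
                omega
        apply glue (l' := l') (c := ((m-1 : ℕ), (b-1 : ℕ))) (d := (m, (b-1 : ℕ)))
        · simp only [ne_eq, Prod.mk.injEq, not_and]; omega
        · exact Or.inr ⟨rfl, Or.inl (by omega)⟩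
        · rintro ⟨i, j⟩
          simp only [Cell, glC, glC', Prod.mk.injEq]
          split_ifs <;> omega
        · simp only [Cell, glC']
          split_ifs <;> omega
        · simp only [Cell, glC']
          split_ifs <;> omega
        · apply IH (N - 2) (by omega)
          · rw [hl']
            simp only [List.sum_cons, List.sum_append, List.sum_replicate, smul_eq_mul]
            rw [Nat.sub_mul]
            omega
          · rw [hl', List.pairwise_cons]
            refine ⟨?_, sorted_helper hsu hu⟩
            intro y hy
            rcases List.mem_append.1 hy with hy | hy
            · rw [List.mem_replicate] at hy; omega
            · rcases List.mem_append.1 hy with hy | hy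
              · rw [List.mem_replicate] at hy; omega
              · have := hu y hy; omega
          · intro x hx
            rw [hl'] at hx
            rcases List.mem_cons.1 hx with rfl | hx'
            · omega
            · rcases List.mem_append.1 hx' with hx' | hx'
              · rw [List.mem_replicate] at hx'; omega
              · rcases List.mem_append.1 hx' with hx' | hx'
                · rw [List.mem_replicate] at hx'; omega
                · exact hpos x (by simp [List.mem_cons.2 (Or.inr (huel x hx'))])
          · exact Nat.even_iff.2 (by omega)
          · intro m' hm' hme'
            have hm'2 : m' % 2 = 0 := Nat.even_iff.1 hme'
            by_cases hmb : m' = b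
            · subst hmb
              have e0 : l'.count m' = m - 2 := by
                rw [hl']
                simp [List.count_cons, List.count_append, List.count_replicate, hcbu,
                  show ¬ (a = m') by omega, show ¬ (m' = a) by omega,
                  show ¬ (m' - 1 = m') by omega, show ¬ (m' = m' - 1) by omega]
              rw [e0]
              exact Nat.even_iff.2 (by omega)
            · have hmem' : m' ∈ u := by
                rw [hl'] at hm'
                rcases List.mem_cons.1 hm' with rfl | h
                · exfalso; omega
                · rcases List.mem_append.1 h with h | h
                  · rw [List.mem_replicate] at h; exact absurd h.2 hmb
                  · rcases List.mem_append.1 h with h | h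
                    · rw [List.mem_replicate] at h; exfalso; omega
                    · exact h
              have h2 := hD m' (List.mem_cons.2 (Or.inr (huel m' hmem'))) hme'
              have e2 : (a :: b :: t₂).count m' = u.count m' := by
                rw [hcount m', if_neg (by omega : ¬ a = m'), zero_add, hequ]
                simp [List.count_append, List.count_replicate,
                  show ¬ (b = m') by omega, show ¬ (m' = b) by omega]
              have e1 : l'.count m' = u.count m' := by
                rw [hl']
                simp [List.count_cons, List.count_append, List.count_replicate,
                  show ¬ (a = m') by omega, show ¬ (m' = a) by omega,
                  show ¬ (b = m') by omega, show ¬ (m' = b) by omega,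
                  show ¬ (b - 1 = m') by omega, show ¬ (m' = b - 1) by omega]
              rw [e1, ← e2]
              exact h2

/-- A partition `p` of `2n` in which every even part occurs with even
multiplicity (a D-partition) has empty 2-core, i.e. its Young diagram can be tiled by
dominoes. -/
theorem D_partition_tileable (n : ℕ) (p : (2 * n).Partition)
    (hD : ∀ m ∈ p.parts, Even m → Even (p.parts.count m)) :
    HasTiling (partList p) := by
  apply main (2 * n)
  · rw [partList, List.sum_reverse, ← Multiset.sum_coe, Multiset.sort_eq]
    exact p.parts_sum
  · exact List.pairwise_reverse.2 (Multiset.pairwise_sort p.parts (· ≤ ·))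
  · intro x hx
    rw [partList, List.mem_reverse, Multiset.mem_sort] at hx
    exact p.parts_pos hx
  · exact ⟨n, two_mul n⟩
  · intro m hm hme
    rw [partList, List.mem_reverse, Multiset.mem_sort] at hm
    have h2 := hD m hm hme
    rw [partList, List.count_reverse]
    have h3 : (p.parts.sort (· ≤ ·)).count m = p.parts.count m := by
      rw [← Multiset.coe_count, Multiset.sort_eq]
    rw [h3]
    exact h2
end
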